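/- Let K ⊗_C E be equipped with the derivations δ ⊗ 1 (i.e., δ(a ⊗ d) = δ(a) ⊗ d for each δ ∈ Δ). Then the map sending an ideal 𝔞 of E to its extension 𝔞^e = K ⊗_C 𝔞 in K ⊗_C E is a bijection between the set of all ideals of E and the set of differential ideals of K ⊗_C E (ideals stable under all the derivations δ ⊗ 1, δ ∈ Δ), with inverse given by contraction 𝔟 ↦ 𝔟^c = {d ∈ E : 1 ⊗ d ∈ 𝔟}. -/

import Mathlib

set_option synthInstance.maxHeartbeats 1000000
set_option maxHeartbeats 1000000

open TensorProduct

namespace ExtContrAux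

variable {C K E : Type} [Field C] [Field K] [Algebra C K] [CommRing E] [Algebra C E]

variable {C K E : Type} [Field C] [Field K] [Algebra C K] [CommRing E] [Algebra C E]

theorem repr_rTensor {J : Type} (b : Module.Basis J C E) (D : Derivation C K K) (x : K ⊗[C] E) (j : J) :
    (Algebra.TensorProduct.basis K b).repr (LinearMap.rTensor E D.toLinearMap x) j
      = D ((Algebra.TensorProduct.basis K b).repr x j) := by
  induction x using TensorProduct.induction_on with
  | zero => simp
  | tmul k e =>
      simp only [LinearMap.rTensor_tmul,
        Algebra.TensorProduct.basis_repr_tmul, Finsupp.smul_apply, Finsupp.mapRange_apply,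
        smul_eq_mul, Derivation.leibniz, Derivation.map_algebraMap, smul_zero, add_zero,
        zero_add, mul_zero, mul_comm]
      rfl
  | add x y hx hy => simp [map_add, hx, hy]


theorem master (𝔞 : Ideal E) :
    ∃ (J₁ J₂ : Type) (b : Module.Basis (J₁ ⊕ J₂) C E),
      (∀ d : E, d ∈ 𝔞 ↔ ∀ j₂ : J₂, b.repr d (Sum.inr j₂) = 0) ∧
      (∀ x : K ⊗[C] E,
        x ∈ Ideal.map (Algebra.TensorProduct.includeRight : E →ₐ[C] K ⊗[C] E) 𝔞 ↔
          ∀ j₂ : J₂, (Algebra.TensorProduct.basis K b).repr x (Sum.inr j₂) = 0) := by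
  classical
  set p : Submodule C E := Submodule.restrictScalars C 𝔞 with hp
  obtain ⟨q, hpq⟩ := p.exists_isCompl
  set e := Submodule.prodEquivOfIsCompl p q hpq with he
  set b1 := Module.Basis.ofVectorSpace C p with hb1
  set b2 := Module.Basis.ofVectorSpace C q with hb2
  set b := (b1.prod b2).map e with hb
  have hbr : ∀ (d : E) j, b.repr d j = (b1.prod b2).repr (e.symm d) j := by
    intro d j; rfl
  -- first claim
  have hmem : ∀ d : E, d ∈ 𝔞 ↔ ∀ j₂, b.repr d (Sum.inr j₂) = 0 := by
    intro d
    have key : (∀ j₂, b.repr d (Sum.inr j₂) = 0) ↔ (e.symm d).2 = 0 := by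
      constructor
      · intro h
        have h2 : b2.repr ((e.symm d).2) = 0 := by
          ext j₂
          have := h j₂
          rw [hbr, Module.Basis.prod_repr_inr] at this
          simpa using this
        simpa using b2.repr.map_eq_zero_iff.mp h2
      · intro h j₂
        rw [hbr, Module.Basis.prod_repr_inr, h, map_zero, Finsupp.zero_apply]
    rw [key, Submodule.prodEquivOfIsCompl_symm_apply_snd_eq_zero]
    exact Iff.rfl
  -- basis vectors indexed by inl lie in 𝔞
  have hbl : ∀ j₁ : _, b (Sum.inl j₁) ∈ 𝔞 := by
    intro j₁
    rw [hmem]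
    intro j₂
    rw [Module.Basis.repr_self, Finsupp.single_apply]
    simp
  refine ⟨_, _, b, hmem, ?_⟩
  set B := Algebra.TensorProduct.basis K b with hB
  -- multiplication by anything preserves vanishing of inr coordinates, for pure 1 ⊗ a
  have hmul : ∀ a : E, a ∈ 𝔞 → ∀ (r : K ⊗[C] E) (j₂ : _),
      B.repr (r * ((1:K) ⊗ₜ[C] a)) (Sum.inr j₂) = 0 := by
    intro a ha r
    induction r using TensorProduct.induction_on with
    | zero => intro j₂; simp
    | tmul k e' =>
        intro j₂
        rw [Algebra.TensorProduct.tmul_mul_tmul, hB, Algebra.TensorProduct.basis_repr_tmul]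
        have : b.repr (e' * a) (Sum.inr j₂) = 0 := (hmem _).mp (Ideal.mul_mem_left 𝔞 e' ha) j₂
        simp [this]
    | add r1 r2 h1 h2 =>
        intro j₂
        rw [add_mul, map_add, Finsupp.add_apply, h1 j₂, h2 j₂, add_zero]
  -- general multiplication closure
  have hmulgen : ∀ x : K ⊗[C] E, (∀ j₂, B.repr x (Sum.inr j₂) = 0) →
      ∀ (r : K ⊗[C] E) (j₂ : _), B.repr (r * x) (Sum.inr j₂) = 0 := by
    intro x hx r j₂
    have hdecomp : r * x = (B.repr x).sum fun j k => k • (r * B j) := by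
      conv_lhs => rw [← B.linearCombination_repr x, Finsupp.linearCombination_apply]
      rw [Finsupp.sum, Finsupp.sum, Finset.mul_sum]
      exact Finset.sum_congr rfl fun j _ => mul_smul_comm _ _ _
    rw [hdecomp, map_finsuppSum, Finsupp.sum_apply]
    apply Finset.sum_eq_zero
    intro j hj
    rcases j with j₁ | j₂'
    · dsimp only
      rw [map_smul, Finsupp.smul_apply]
      have hBj : B (Sum.inl j₁) = (1:K) ⊗ₜ[C] b (Sum.inl j₁) :=
        Algebra.TensorProduct.basis_apply b (Sum.inl j₁)
      rw [hBj, hmul _ (hbl j₁) r j₂, smul_zero]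
    · dsimp only
      rw [hx j₂', zero_smul, map_zero, Finsupp.coe_zero, Pi.zero_apply]
  intro x
  constructor
  · intro hx
    have hx' : x ∈ Submodule.span (K ⊗[C] E)
        ((Algebra.TensorProduct.includeRight : E →ₐ[C] K ⊗[C] E) '' 𝔞) := hx
    clear hx
    induction hx' using Submodule.span_induction with
    | mem y hy =>
        obtain ⟨a, ha, rfl⟩ := hy
        intro j₂
        rw [Algebra.TensorProduct.includeRight_apply, hB, Algebra.TensorProduct.basis_repr_tmul]
        have : b.repr a (Sum.inr j₂) = 0 := (hmem _).mp ha j₂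
        simp [this]
    | zero => intro j₂; simp
    | add y z hy hz hy' hz' => intro j₂; rw [map_add, Finsupp.add_apply, hy' j₂, hz' j₂, add_zero]
    | smul r y hy hy' => intro j₂; rw [smul_eq_mul]; exact hmulgen y hy' r j₂
  · intro hx
    have hdecomp : x = (B.repr x).sum fun j k => k • B j := by
      conv_lhs => rw [← B.linearCombination_repr x, Finsupp.linearCombination_apply]
    rw [hdecomp]
    apply Submodule.sum_mem
    intro j hj
    rcases j with j₁ | j₂
    · dsimp only
      have hBj : B (Sum.inl j₁) = (1:K) ⊗ₜ[C] b (Sum.inl j₁) :=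
        Algebra.TensorProduct.basis_apply b (Sum.inl j₁)
      have h1 : ((1:K) ⊗ₜ[C] b (Sum.inl j₁)) ∈
          Ideal.map (Algebra.TensorProduct.includeRight : E →ₐ[C] K ⊗[C] E) 𝔞 :=
        Ideal.mem_map_of_mem _ (hbl j₁)
      rw [hBj, Algebra.smul_def]
      exact Ideal.mul_mem_left _ _ h1
    · dsimp only
      rw [hx j₂, zero_smul]
      exact Submodule.zero_mem _
end ExtContrAux

/-- Let `C` be an algebraically closed field of characteristic zero, `K` a field
extension of `C` with a finite set of commuting derivations (trivial on `C`) whose field of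
constants is exactly `C`, and `E` a commutative `C`-algebra (with all derivations acting as zero).
Equip `K ⊗[C] E` with the derivations `δ ⊗ 1`.  Then extension `𝔞 ↦ 𝔞^e = K ⊗_C 𝔞` is a
bijection from the set of all ideals of `E` onto the set of differential ideals of `K ⊗[C] E`,
with inverse given by contraction `𝔟 ↦ 𝔟^c = {d ∈ E : 1 ⊗ d ∈ 𝔟}`. -/
theorem extension_contraction_bijection
    (C K E : Type) [Field C] [IsAlgClosed C] [CharZero C]
    [Field K] [Algebra C K] [CommRing E] [Algebra C E]
    (ι : Type) [Fintype ι] (δ : ι → Derivation C K K)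
    (hcomm : ∀ i j : ι, ∀ x : K, δ i (δ j x) = δ j (δ i x))
    (hconst : ∀ x : K, (∀ i, δ i x = 0) → ∃ c : C, algebraMap C K c = x) :
    -- extensions of ideals of `E` are differential ideals of `K ⊗[C] E`
    (∀ 𝔞 : Ideal E, ∀ i : ι, ∀ x ∈ Ideal.map
        (Algebra.TensorProduct.includeRight : E →ₐ[C] K ⊗[C] E) 𝔞,
        LinearMap.rTensor E (δ i).toLinearMap x ∈
          Ideal.map (Algebra.TensorProduct.includeRight : E →ₐ[C] K ⊗[C] E) 𝔞)
    -- the contraction of the extension of an ideal of `E` is the ideal itself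
    ∧ (∀ 𝔞 : Ideal E,
        Ideal.comap (Algebra.TensorProduct.includeRight : E →ₐ[C] K ⊗[C] E)
          (Ideal.map (Algebra.TensorProduct.includeRight : E →ₐ[C] K ⊗[C] E) 𝔞) = 𝔞)
    -- every differential ideal of `K ⊗[C] E` is the extension of its contraction
    ∧ (∀ 𝔟 : Ideal (K ⊗[C] E),
        (∀ i : ι, ∀ x ∈ 𝔟, LinearMap.rTensor E (δ i).toLinearMap x ∈ 𝔟) →
        Ideal.map (Algebra.TensorProduct.includeRight : E →ₐ[C] K ⊗[C] E)
          (Ideal.comap (Algebra.TensorProduct.includeRight : E →ₐ[C] K ⊗[C] E) 𝔟) = 𝔟) := by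
  classical
  refine ⟨?_, ?_, ?_⟩
  · -- Part 1
    intro 𝔞 i x hx
    obtain ⟨J₁, J₂, b, hmem, hext⟩ := ExtContrAux.master (C := C) (K := K) 𝔞
    rw [hext] at hx ⊢
    intro j₂
    rw [ExtContrAux.repr_rTensor, hx j₂, map_zero]
  · -- Part 2
    intro 𝔞
    obtain ⟨J₁, J₂, b, hmem, hext⟩ := ExtContrAux.master (C := C) (K := K) 𝔞
    ext d
    rw [Ideal.mem_comap, hext, Algebra.TensorProduct.includeRight_apply]
    constructor
    · intro h
      rw [hmem]
      intro j₂
      have := h j₂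
      rw [Algebra.TensorProduct.basis_repr_tmul] at this
      simp only [one_smul, Finsupp.mapRange_apply] at this
      exact (algebraMap C K).injective (this.trans (map_zero _).symm)
    · intro hd j₂
      rw [Algebra.TensorProduct.basis_repr_tmul]
      simp only [one_smul, Finsupp.mapRange_apply, (hmem d).mp hd j₂, map_zero]
  · -- Part 3
    intro 𝔟 hdiff
    obtain ⟨J₁, J₂, b, hmem, hext⟩ := ExtContrAux.master (C := C) (K := K)
      (Ideal.comap (Algebra.TensorProduct.includeRight : E →ₐ[C] K ⊗[C] E) 𝔟)
    set B := Algebra.TensorProduct.basis K b with hB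
    refine le_antisymm Ideal.map_comap_le ?_
    intro x hx
    suffices H : ∀ n : ℕ, ∀ x ∈ 𝔟, ((B.repr x).support.filter (fun j => j.isRight)).card = n →
        x ∈ Ideal.map (Algebra.TensorProduct.includeRight : E →ₐ[C] K ⊗[C] E)
          (Ideal.comap (Algebra.TensorProduct.includeRight : E →ₐ[C] K ⊗[C] E) 𝔟) by
      exact H _ x hx rfl
    intro n
    induction n using Nat.strong_induction_on with
    | _ n IH =>
      intro x hx hcard
      by_cases hs : ((B.repr x).support.filter (fun j => j.isRight)) = ∅
      · rw [hext]
        intro j₂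
        by_contra hne
        have hjs : Sum.inr j₂ ∈ (B.repr x).support.filter (fun j => j.isRight) :=
          Finset.mem_filter.mpr ⟨Finsupp.mem_support_iff.mpr hne, rfl⟩
        rw [hs] at hjs
        exact absurd hjs (Finset.notMem_empty _)
      · exfalso
        obtain ⟨j0, hj0⟩ := Finset.nonempty_iff_ne_empty.mpr hs
        obtain ⟨hj0supp, hj0right⟩ := Finset.mem_filter.mp hj0
        obtain ⟨j₂0, rfl⟩ : ∃ j₂0, j0 = Sum.inr j₂0 := by
          rcases j0 with j₁ | j₂0
          · simp at hj0right
          · exact ⟨j₂0, rfl⟩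
        set k0 := B.repr x (Sum.inr j₂0) with hk0
        have hk0ne : k0 ≠ 0 := Finsupp.mem_support_iff.mp hj0supp
        set x' := k0⁻¹ • x with hxp
        have hx'mem : x' ∈ 𝔟 := by
          rw [hxp, Algebra.smul_def]
          exact Ideal.mul_mem_left _ _ hx
        have hreprx' : B.repr x' = k0⁻¹ • B.repr x := by rw [hxp, map_smul]
        have hsuppx' : (B.repr x').support = (B.repr x).support := by
          rw [hreprx']
          exact Finsupp.support_smul_eq (inv_ne_zero hk0ne)
        have hx'j0 : B.repr x' (Sum.inr j₂0) = 1 := by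
          rw [hreprx', Finsupp.smul_apply, ← hk0, smul_eq_mul, inv_mul_cancel₀ hk0ne]
        -- all derivatives of x' vanish
        have hder : ∀ (i : ι) (j₂ : J₂), (δ i) (B.repr x' (Sum.inr j₂)) = 0 := by
          intro i j₂
          set y := LinearMap.rTensor E (δ i).toLinearMap x' with hy
          have hymem : y ∈ 𝔟 := hdiff i x' hx'mem
          have hycoord : ∀ j, B.repr y j = (δ i) (B.repr x' j) := fun j => ExtContrAux.repr_rTensor b (δ i) x' j
          have hsub : (B.repr y).support.filter (fun j => j.isRight) ⊆
              ((B.repr x).support.filter (fun j => j.isRight)).erase (Sum.inr j₂0) := by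
            intro j hj
            obtain ⟨hjs, hjr⟩ := Finset.mem_filter.mp hj
            have hjne : j ≠ Sum.inr j₂0 := by
              intro h
              apply Finsupp.mem_support_iff.mp hjs
              rw [h, hycoord, hx'j0]
              exact (δ i).map_one_eq_zero
            refine Finset.mem_erase.mpr ⟨hjne, Finset.mem_filter.mpr ⟨?_, hjr⟩⟩
            rw [← hsuppx']
            apply Finsupp.mem_support_iff.mpr
            intro h0
            apply Finsupp.mem_support_iff.mp hjs
            rw [hycoord, h0, map_zero]
          have hcardlt : ((B.repr y).support.filter (fun j => j.isRight)).card < n := by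
            calc ((B.repr y).support.filter (fun j => j.isRight)).card
                ≤ (((B.repr x).support.filter (fun j => j.isRight)).erase (Sum.inr j₂0)).card :=
                  Finset.card_le_card hsub
              _ < ((B.repr x).support.filter (fun j => j.isRight)).card :=
                  Finset.card_erase_lt_of_mem hj0
              _ = n := hcard
          have := (hext y).mp (IH _ hcardlt y hymem rfl) j₂
          rwa [hycoord] at this
        choose c hc using fun j₂ => hconst _ (fun i => hder i j₂)
        set s := (B.repr x').support.filter (fun j => j.isRight) with hsdef
        have hj0s : Sum.inr j₂0 ∈ s := by
          rw [hsdef, hsuppx']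
          exact hj0
        set cc : J₁ ⊕ J₂ → C := Sum.elim (fun _ => (0:C)) c with hcc
        set a : E := ∑ j ∈ s, cc j • b j with ha
        have hra : ∀ j, b.repr a j = if j ∈ s then cc j else 0 := by
          intro j
          rw [ha, map_sum, Finset.sum_apply']
          simp only [map_smul, Module.Basis.repr_self, Finsupp.smul_apply, Finsupp.single_apply,
            smul_eq_mul, mul_ite, mul_one, mul_zero]
          exact Finset.sum_ite_eq' s j cc
        set w := (1:K) ⊗ₜ[C] a with hw
        have hrw : ∀ j, B.repr w j = algebraMap C K (b.repr a j) := by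
          intro j
          rw [hw, hB, Algebra.TensorProduct.basis_repr_tmul, one_smul, Finsupp.mapRange_apply]
        have humem : x' - w ∈ Ideal.map (Algebra.TensorProduct.includeRight : E →ₐ[C] K ⊗[C] E)
            (Ideal.comap (Algebra.TensorProduct.includeRight : E →ₐ[C] K ⊗[C] E) 𝔟) := by
          rw [hext]
          intro j₂
          rw [map_sub, Finsupp.sub_apply, hrw, hra]
          by_cases hjs : Sum.inr j₂ ∈ s
          · rw [if_pos hjs]
            have : cc (Sum.inr j₂) = c j₂ := rfl
            rw [this, hc j₂, sub_self]
          · rw [if_neg hjs, map_zero, sub_zero]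
            have : Sum.inr j₂ ∉ (B.repr x').support := by
              intro h
              exact hjs (Finset.mem_filter.mpr ⟨h, rfl⟩)
            exact Finsupp.notMem_support_iff.mp this
        have hwmem : w ∈ 𝔟 := by
          have h1 : x' - w ∈ 𝔟 := Ideal.map_comap_le humem
          have h2 := sub_mem hx'mem h1
          rwa [sub_sub_cancel] at h2
        have hamem : a ∈ Ideal.comap (Algebra.TensorProduct.includeRight : E →ₐ[C] K ⊗[C] E) 𝔟 := by
          rw [Ideal.mem_comap, Algebra.TensorProduct.includeRight_apply]
          exact hwmem
        have hc0 : c j₂0 = 0 := by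
          have := (hmem a).mp hamem j₂0
          rw [hra, if_pos hj0s] at this
          exact this
        have : (1:K) = 0 := by
          rw [← hx'j0, ← hc j₂0, hc0, map_zero]
        exact one_ne_zero this
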